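/- Let G : C ⥤ D be a strong monoidal functor with an ambiadjunction F ⊣ G ⊣ F, where F carries the lax monoidal structure induced from the monoidal adjunction G ⊣ F and the oplax monoidal structure induced from the opmonoidal adjunction F ⊣ G. If the right projection formula morphism rproj^{F,G⊣F}_{X,A} : F(X) ⊗ A ⟶ F(X ⊗ G(A)) and the right projection formula morphism rproj^{F,F⊣G}_{X,A} : F(X ⊗ G(A)) ⟶ F(X) ⊗ A are mutually inverse for all A ∈ C, X ∈ D, then F together with these lax and oplax structures is a Frobenius monoidal functor. -/

import Mathlib

open CategoryTheory MonoidalCategory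

universe v₁ v₂ v₃ u₁ u₂ u₃

/-- The data of a functor equipped with both a lax and an oplax monoidal structure. -/
structure FrobData (D : Type u₁) [Category.{v₁} D] [MonoidalCategory D]
    (C : Type u₂) [Category.{v₂} C] [MonoidalCategory C] where
  F : D ⥤ C
  lax : ∀ X Y : D, F.obj X ⊗ F.obj Y ⟶ F.obj (X ⊗ Y)
  lax₀ : 𝟙_ C ⟶ F.obj (𝟙_ D)
  oplax : ∀ X Y : D, F.obj (X ⊗ Y) ⟶ F.obj X ⊗ F.obj Y
  oplax₀ : F.obj (𝟙_ D) ⟶ 𝟙_ C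

variable {D : Type u₁} [Category.{v₁} D] [MonoidalCategory D]
variable {C : Type u₂} [Category.{v₂} C] [MonoidalCategory C]

/-- The axioms of a lax monoidal structure. -/
def FrobData.IsLax (d : FrobData D C) : Prop :=
  (∀ {X Y X' Y' : D} (f : X ⟶ X') (g : Y ⟶ Y'),
    (d.F.map f ⊗ₘ d.F.map g) ≫ d.lax X' Y' = d.lax X Y ≫ d.F.map (f ⊗ₘ g)) ∧
  (∀ X Y Z : D,
    (d.lax X Y ▷ d.F.obj Z) ≫ d.lax (X ⊗ Y) Z ≫ d.F.map (α_ X Y Z).hom =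
      (α_ (d.F.obj X) (d.F.obj Y) (d.F.obj Z)).hom ≫ (d.F.obj X ◁ d.lax Y Z) ≫
        d.lax X (Y ⊗ Z)) ∧
  (∀ X : D,
    (d.lax₀ ▷ d.F.obj X) ≫ d.lax (𝟙_ D) X ≫ d.F.map (λ_ X).hom = (λ_ (d.F.obj X)).hom) ∧
  (∀ X : D,
    (d.F.obj X ◁ d.lax₀) ≫ d.lax X (𝟙_ D) ≫ d.F.map (ρ_ X).hom = (ρ_ (d.F.obj X)).hom)

/-- The axioms of an oplax monoidal structure. -/
def FrobData.IsOplax (d : FrobData D C) : Prop :=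
  (∀ {X Y X' Y' : D} (f : X ⟶ X') (g : Y ⟶ Y'),
    d.F.map (f ⊗ₘ g) ≫ d.oplax X' Y' = d.oplax X Y ≫ (d.F.map f ⊗ₘ d.F.map g)) ∧
  (∀ X Y Z : D,
    d.oplax (X ⊗ Y) Z ≫ (d.oplax X Y ▷ d.F.obj Z) ≫
        (α_ (d.F.obj X) (d.F.obj Y) (d.F.obj Z)).hom =
      d.F.map (α_ X Y Z).hom ≫ d.oplax X (Y ⊗ Z) ≫ (d.F.obj X ◁ d.oplax Y Z)) ∧
  (∀ X : D,
    d.oplax (𝟙_ D) X ≫ (d.oplax₀ ▷ d.F.obj X) ≫ (λ_ (d.F.obj X)).hom = d.F.map (λ_ X).hom) ∧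
  (∀ X : D,
    d.oplax X (𝟙_ D) ≫ (d.F.obj X ◁ d.oplax₀) ≫ (ρ_ (d.F.obj X)).hom = d.F.map (ρ_ X).hom)

/-- The two Frobenius compatibility conditions. -/
def FrobData.IsFrobenius (d : FrobData D C) : Prop :=
  (∀ X Y Z : D,
    (d.F.obj X ◁ d.oplax Y Z) ≫ (α_ (d.F.obj X) (d.F.obj Y) (d.F.obj Z)).inv ≫
        (d.lax X Y ▷ d.F.obj Z) =
      d.lax X (Y ⊗ Z) ≫ d.F.map (α_ X Y Z).inv ≫ d.oplax (X ⊗ Y) Z) ∧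
  (∀ X Y Z : D,
    (d.oplax X Y ▷ d.F.obj Z) ≫ (α_ (d.F.obj X) (d.F.obj Y) (d.F.obj Z)).hom ≫
        (d.F.obj X ◁ d.lax Y Z) =
      d.lax (X ⊗ Y) Z ≫ d.F.map (α_ X Y Z).hom ≫ d.oplax X (Y ⊗ Z))

open Functor.LaxMonoidal Functor.OplaxMonoidal


open Opposite

/-- The opposite of a lax monoidal functor is oplax monoidal. -/
def auxOpOplax (G : C ⥤ D) [G.LaxMonoidal] : G.op.OplaxMonoidal where
  η := (ε G).op
  δ X Y := (μ G X.unop Y.unop).op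
  δ_natural_left f X' := Quiver.Hom.unop_inj (by simp)
  δ_natural_right X' f := Quiver.Hom.unop_inj (by simp)
  oplax_associativity X Y Z := Quiver.Hom.unop_inj (by simp)
  oplax_left_unitality X := Quiver.Hom.unop_inj (by simp)
  oplax_right_unitality X := Quiver.Hom.unop_inj (by simp)

/-- The induced lax tensorator, with cleanly-typed components. -/
def auxM (G : C ⥤ D) [G.Monoidal] (F : D ⥤ C) (adj₂ : G ⊣ F) (X Y : D) :
    F.obj X ⊗ F.obj Y ⟶ F.obj (X ⊗ Y) :=
  adj₂.unit.app (F.obj X ⊗ F.obj Y) ≫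
    F.map (δ G (F.obj X) (F.obj Y) ≫ (adj₂.counit.app X ⊗ₘ adj₂.counit.app Y))

/-- The induced lax unit, with cleanly-typed components. -/
def auxM₀ (G : C ⥤ D) [G.Monoidal] (F : D ⥤ C) (adj₂ : G ⊣ F) : 𝟙_ C ⟶ F.obj (𝟙_ D) :=
  adj₂.unit.app (𝟙_ C) ≫ F.map (η G)

/-- The induced oplax cotensorator, with cleanly-typed components. -/
def auxP (G : C ⥤ D) [G.Monoidal] (F : D ⥤ C) (adj₁ : F ⊣ G) (X Y : D) :
    F.obj (X ⊗ Y) ⟶ F.obj X ⊗ F.obj Y :=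
  F.map ((adj₁.unit.app X ⊗ₘ adj₁.unit.app Y) ≫ μ G (F.obj X) (F.obj Y)) ≫
    adj₁.counit.app (F.obj X ⊗ F.obj Y)

/-- The induced oplax counit, with cleanly-typed components. -/
def auxP₀ (G : C ⥤ D) [G.Monoidal] (F : D ⥤ C) (adj₁ : F ⊣ G) : F.obj (𝟙_ D) ⟶ 𝟙_ C :=
  F.map (ε G) ≫ adj₁.counit.app (𝟙_ C)

/-- Given a strong monoidal functor `G : C ⥤ D` and an ambiadjunction `F ⊣ G ⊣ F`, the
functor `F` equipped with the lax monoidal structure induced from the monoidal adjunction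
`G ⊣ F` and the oplax monoidal structure induced from the opmonoidal adjunction `F ⊣ G`. -/
def inducedFrobData (G : C ⥤ D) [G.Monoidal] (F : D ⥤ C)
    (adj₁ : F ⊣ G) (adj₂ : G ⊣ F) : FrobData D C where
  F := F
  lax X Y := adj₂.unit.app (F.obj X ⊗ F.obj Y) ≫
    F.map (δ G (F.obj X) (F.obj Y) ≫ (adj₂.counit.app X ⊗ₘ adj₂.counit.app Y))
  lax₀ := adj₂.unit.app (𝟙_ C) ≫ F.map (η G)
  oplax X Y := F.map ((adj₁.unit.app X ⊗ₘ adj₁.unit.app Y) ≫ μ G (F.obj X) (F.obj Y)) ≫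
    adj₁.counit.app (F.obj X ⊗ F.obj Y)
  oplax₀ := F.map (ε G) ≫ adj₁.counit.app (𝟙_ C)

/-- The right projection formula morphism `F(X) ⊗ A ⟶ F(X ⊗ G(A))` associated to the
monoidal adjunction `G ⊣ F`. -/
def rprojR (G : C ⥤ D) [G.Monoidal] (F : D ⥤ C) (adj₁ : F ⊣ G) (adj₂ : G ⊣ F)
    (X : D) (A : C) : F.obj X ⊗ A ⟶ F.obj (X ⊗ G.obj A) :=
  (F.obj X ◁ adj₂.unit.app A) ≫ (inducedFrobData G F adj₁ adj₂).lax X (G.obj A)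

/-- The right projection formula morphism `F(X ⊗ G(A)) ⟶ F(X) ⊗ A` associated to the
opmonoidal adjunction `F ⊣ G`. -/
def rprojL (G : C ⥤ D) [G.Monoidal] (F : D ⥤ C) (adj₁ : F ⊣ G) (adj₂ : G ⊣ F)
    (X : D) (A : C) : F.obj (X ⊗ G.obj A) ⟶ F.obj X ⊗ A :=
  (inducedFrobData G F adj₁ adj₂).oplax X (G.obj A) ≫ (F.obj X ◁ adj₁.counit.app A)

/-- Theorem A: in the ambiadjunction context, if the two right projection
formula morphisms are mutual inverses, then `F` with the induced lax and oplax monoidal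
structures is a Frobenius monoidal functor. -/
theorem frobenius_monoidal_of_right_projection_formulas_mutually_inverse
    (G : C ⥤ D) [G.Monoidal] (F : D ⥤ C) (adj₁ : F ⊣ G) (adj₂ : G ⊣ F)
    (h₁ : ∀ (X : D) (A : C),
      rprojR G F adj₁ adj₂ X A ≫ rprojL G F adj₁ adj₂ X A = 𝟙 (F.obj X ⊗ A))
    (h₂ : ∀ (X : D) (A : C),
      rprojL G F adj₁ adj₂ X A ≫ rprojR G F adj₁ adj₂ X A = 𝟙 (F.obj (X ⊗ G.obj A))) :
    (inducedFrobData G F adj₁ adj₂).IsLax ∧ (inducedFrobData G F adj₁ adj₂).IsOplax ∧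
      (inducedFrobData G F adj₁ adj₂).IsFrobenius := by
  letI : F.LaxMonoidal := adj₂.rightAdjointLaxMonoidal
  letI : G.op.OplaxMonoidal := auxOpOplax G
  letI : F.op.LaxMonoidal := (adj₁.op).rightAdjointLaxMonoidal
  -- bridges between structure fields and the clean auxiliary morphisms
  have hl2 : ∀ X Y : D, (inducedFrobData G F adj₁ adj₂).lax X Y = auxM G F adj₂ X Y :=
    fun _ _ => rfl
  have hl₀2 : (inducedFrobData G F adj₁ adj₂).lax₀ = auxM₀ G F adj₂ := rfl
  have hp2 : ∀ X Y : D, (inducedFrobData G F adj₁ adj₂).oplax X Y = auxP G F adj₁ X Y :=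
    fun _ _ => rfl
  have hp₀2 : (inducedFrobData G F adj₁ adj₂).oplax₀ = auxP₀ G F adj₁ := rfl
  -- identification of the clean morphisms with the transported (op)lax structures
  have hm : ∀ X Y : D, auxM G F adj₂ X Y = μ F X Y := by
    intro X Y
    rw [Adjunction.rightAdjointLaxMonoidal_μ, Adjunction.homEquiv_unit]
    rfl
  have hm₀ : auxM₀ G F adj₂ = ε F := by
    rw [Adjunction.rightAdjointLaxMonoidal_ε, Adjunction.homEquiv_unit]
    rfl
  have hq : ∀ X Y : D, auxP G F adj₁ X Y = (μ F.op (op X) (op Y)).unop := by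
    intro X Y
    rw [Adjunction.rightAdjointLaxMonoidal_μ, Adjunction.homEquiv_unit]
    simp [auxOpOplax, Functor.OplaxMonoidal.δ, Functor.OplaxMonoidal.η, opEquiv, auxP]
    rfl
  have hq₀ : auxP₀ G F adj₁ = (ε F.op).unop := by
    rw [Adjunction.rightAdjointLaxMonoidal_ε, Adjunction.homEquiv_unit]
    simp [auxOpOplax, Functor.OplaxMonoidal.δ, Functor.OplaxMonoidal.η, opEquiv, auxP₀]
    rfl
  -- lax monoidal axioms for `auxM`
  have m_nat : ∀ {X Y X' Y' : D} (f : X ⟶ X') (g : Y ⟶ Y'),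
      (F.map f ⊗ₘ F.map g) ≫ auxM G F adj₂ X' Y' = auxM G F adj₂ X Y ≫ F.map (f ⊗ₘ g) := by
    intro X Y X' Y' f g
    rw [hm, hm]
    exact μ_natural F f g
  have m_nat_right : ∀ (X : D) {Y Y' : D} (g : Y ⟶ Y'),
      (F.obj X ◁ F.map g) ≫ auxM G F adj₂ X Y' = auxM G F adj₂ X Y ≫ F.map (X ◁ g) := by
    intro X Y Y' g
    rw [hm, hm]
    exact μ_natural_right F X g
  have m_assoc : ∀ X Y Z : D,
      (auxM G F adj₂ X Y ▷ F.obj Z) ≫ auxM G F adj₂ (X ⊗ Y) Z ≫ F.map (α_ X Y Z).hom =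
        (α_ (F.obj X) (F.obj Y) (F.obj Z)).hom ≫ (F.obj X ◁ auxM G F adj₂ Y Z) ≫
          auxM G F adj₂ X (Y ⊗ Z) := by
    intro X Y Z
    rw [hm, hm, hm, hm]
    exact Functor.LaxMonoidal.associativity F X Y Z
  have m_assoc' : ∀ X Y Z : D,
      (auxM G F adj₂ X Y ▷ F.obj Z) ≫ auxM G F adj₂ (X ⊗ Y) Z =
        (α_ (F.obj X) (F.obj Y) (F.obj Z)).hom ≫ (F.obj X ◁ auxM G F adj₂ Y Z) ≫
          auxM G F adj₂ X (Y ⊗ Z) ≫ F.map (α_ X Y Z).inv := by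
    intro X Y Z
    rw [hm, hm, hm, hm, ← Functor.LaxMonoidal.associativity_assoc, ← F.map_comp,
      Iso.hom_inv_id, F.map_id, Category.comp_id]
  have m_lu : ∀ X : D,
      (auxM₀ G F adj₂ ▷ F.obj X) ≫ auxM G F adj₂ (𝟙_ D) X ≫ F.map (λ_ X).hom =
        (λ_ (F.obj X)).hom := by
    intro X
    rw [hm, hm₀]
    exact (Functor.LaxMonoidal.left_unitality F X).symm
  have m_ru : ∀ X : D,
      (F.obj X ◁ auxM₀ G F adj₂) ≫ auxM G F adj₂ X (𝟙_ D) ≫ F.map (ρ_ X).hom =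
        (ρ_ (F.obj X)).hom := by
    intro X
    rw [hm, hm₀]
    exact (Functor.LaxMonoidal.right_unitality F X).symm
  -- oplax monoidal axioms for `auxP`
  have p_nat : ∀ {X Y X' Y' : D} (f : X ⟶ X') (g : Y ⟶ Y'),
      F.map (f ⊗ₘ g) ≫ auxP G F adj₁ X' Y' = auxP G F adj₁ X Y ≫ (F.map f ⊗ₘ F.map g) := by
    intro X Y X' Y' f g
    rw [hq, hq]
    simpa using (congrArg Quiver.Hom.unop (μ_natural (F := F.op) f.op g.op)).symm
  have p_nat_right : ∀ (X : D) {Y Y' : D} (g : Y ⟶ Y'),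
      F.map (X ◁ g) ≫ auxP G F adj₁ X Y' = auxP G F adj₁ X Y ≫ (F.obj X ◁ F.map g) := by
    intro X Y Y' g
    rw [hq, hq]
    simpa using (congrArg Quiver.Hom.unop (μ_natural_right (F := F.op) (op X) g.op)).symm
  have p_coassoc : ∀ X Y Z : D,
      auxP G F adj₁ (X ⊗ Y) Z ≫ (auxP G F adj₁ X Y ▷ F.obj Z) ≫
          (α_ (F.obj X) (F.obj Y) (F.obj Z)).hom =
        F.map (α_ X Y Z).hom ≫ auxP G F adj₁ X (Y ⊗ Z) ≫
          (F.obj X ◁ auxP G F adj₁ Y Z) := by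
    intro X Y Z
    rw [hq, hq, hq, hq]
    simpa using (congrArg Quiver.Hom.unop
      (Functor.LaxMonoidal.associativity_inv (F := F.op) (op X) (op Y) (op Z))).symm
  have p_lu : ∀ X : D,
      auxP G F adj₁ (𝟙_ D) X ≫ (auxP₀ G F adj₁ ▷ F.obj X) ≫ (λ_ (F.obj X)).hom =
        F.map (λ_ X).hom := by
    intro X
    rw [hq, hq₀]
    simpa using congrArg Quiver.Hom.unop
      (Functor.LaxMonoidal.left_unitality_inv (F := F.op) (op X))
  have p_ru : ∀ X : D,
      auxP G F adj₁ X (𝟙_ D) ≫ (F.obj X ◁ auxP₀ G F adj₁) ≫ (ρ_ (F.obj X)).hom =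
        F.map (ρ_ X).hom := by
    intro X
    rw [hq, hq₀]
    simpa using congrArg Quiver.Hom.unop
      (Functor.LaxMonoidal.right_unitality_inv (F := F.op) (op X))
  -- triangle identities with cleanly-typed components
  have tri1 : ∀ Y : D,
      F.map (show Y ⟶ G.obj (F.obj Y) from adj₁.unit.app Y) ≫
        (show F.obj (G.obj (F.obj Y)) ⟶ F.obj Y from adj₁.counit.app (F.obj Y)) =
          𝟙 (F.obj Y) :=
    fun Y => adj₁.left_triangle_components Y
  have tri2 : ∀ Y : D,
      (show F.obj Y ⟶ F.obj (G.obj (F.obj Y)) from adj₂.unit.app (F.obj Y)) ≫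
        F.map (show G.obj (F.obj Y) ⟶ Y from adj₂.counit.app Y) = 𝟙 (F.obj Y) :=
    fun Y => adj₂.right_triangle_components Y
  -- expressions for the projection formula morphisms
  have hR : ∀ (X : D) (A : C), rprojR G F adj₁ adj₂ X A =
      (F.obj X ◁ (show A ⟶ F.obj (G.obj A) from adj₂.unit.app A)) ≫
        auxM G F adj₂ X (G.obj A) := fun _ _ => rfl
  have hL : ∀ (X : D) (A : C), rprojL G F adj₁ adj₂ X A =
      auxP G F adj₁ X (G.obj A) ≫
        (F.obj X ◁ (show F.obj (G.obj A) ⟶ A from adj₁.counit.app A)) := fun _ _ => rfl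
  -- lemma A : the lax structure factors through `rprojR`
  have lemA : ∀ X Y : D, auxM G F adj₂ X Y = rprojR G F adj₁ adj₂ X (F.obj Y) ≫
      F.map (X ◁ (show G.obj (F.obj Y) ⟶ Y from adj₂.counit.app Y)) := by
    intro X Y
    rw [hR X (F.obj Y), Category.assoc,
      ← m_nat_right X (show G.obj (F.obj Y) ⟶ Y from adj₂.counit.app Y),
      ← MonoidalCategory.whiskerLeft_comp_assoc, tri2 Y, MonoidalCategory.whiskerLeft_id,
      Category.id_comp]
  -- lemma B : the oplax structure factors through `rprojL`
  have lemB : ∀ X Y : D, auxP G F adj₁ X Y =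
      F.map (X ◁ (show Y ⟶ G.obj (F.obj Y) from adj₁.unit.app Y)) ≫
        rprojL G F adj₁ adj₂ X (F.obj Y) := by
    intro X Y
    rw [hL X (F.obj Y),
      reassoc_of% (p_nat_right X (show Y ⟶ G.obj (F.obj Y) from adj₁.unit.app Y)),
      ← MonoidalCategory.whiskerLeft_comp, tri1 Y, MonoidalCategory.whiskerLeft_id,
      Category.comp_id]
  -- claim 1
  have claim1 : ∀ (X Y : D) (A : C),
      (auxM G F adj₂ X Y ▷ A) ≫ rprojR G F adj₁ adj₂ (X ⊗ Y) A =
        (α_ (F.obj X) (F.obj Y) A).hom ≫ (F.obj X ◁ rprojR G F adj₁ adj₂ Y A) ≫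
          auxM G F adj₂ X (Y ⊗ G.obj A) ≫ F.map (α_ X Y (G.obj A)).inv := by
    intro X Y A
    rw [hR (X ⊗ Y) A, hR Y A]
    simp only [Category.assoc]
    rw [← whisker_exchange_assoc, m_assoc' X Y (G.obj A),
      associator_naturality_right_assoc, ← MonoidalCategory.whiskerLeft_comp_assoc]
  -- claim 2
  have claim2 : ∀ (X Y : D) (A : C),
      rprojL G F adj₁ adj₂ (X ⊗ Y) A ≫ (auxP G F adj₁ X Y ▷ A) ≫
          (α_ (F.obj X) (F.obj Y) A).hom =
        F.map (α_ X Y (G.obj A)).hom ≫ auxP G F adj₁ X (Y ⊗ G.obj A) ≫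
          (F.obj X ◁ rprojL G F adj₁ adj₂ Y A) := by
    intro X Y A
    rw [hL (X ⊗ Y) A, hL Y A]
    simp only [Category.assoc]
    rw [whisker_exchange_assoc, associator_naturality_right,
      reassoc_of% (p_coassoc X Y (G.obj A)), ← MonoidalCategory.whiskerLeft_comp]
  -- claim 3
  have claim3 : ∀ (X Y : D) (A : C),
      (auxP G F adj₁ X Y ▷ A) ≫ (α_ (F.obj X) (F.obj Y) A).hom ≫
          (F.obj X ◁ rprojR G F adj₁ adj₂ Y A) =
        rprojR G F adj₁ adj₂ (X ⊗ Y) A ≫ F.map (α_ X Y (G.obj A)).hom ≫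
          auxP G F adj₁ X (Y ⊗ G.obj A) := by
    intro X Y A
    have e : (𝟙 (F.obj (X ⊗ Y) ⊗ A)) ≫ (auxP G F adj₁ X Y ▷ A) ≫
        (α_ (F.obj X) (F.obj Y) A).hom ≫ (F.obj X ◁ rprojR G F adj₁ adj₂ Y A) =
          rprojR G F adj₁ adj₂ (X ⊗ Y) A ≫ F.map (α_ X Y (G.obj A)).hom ≫
            auxP G F adj₁ X (Y ⊗ G.obj A) := by
      rw [← h₁ (X ⊗ Y) A, Category.assoc, reassoc_of% (claim2 X Y A),
        ← MonoidalCategory.whiskerLeft_comp, h₂ Y A, MonoidalCategory.whiskerLeft_id,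
        Category.comp_id]
    simpa using e
  -- claim 4
  have claim4 : ∀ (X Y : D) (A : C),
      (F.obj X ◁ rprojL G F adj₁ adj₂ Y A) ≫ (α_ (F.obj X) (F.obj Y) A).inv ≫
          (auxM G F adj₂ X Y ▷ A) =
        auxM G F adj₂ X (Y ⊗ G.obj A) ≫ F.map (α_ X Y (G.obj A)).inv ≫
          rprojL G F adj₁ adj₂ (X ⊗ Y) A := by
    intro X Y A
    have key : ((F.obj X ◁ rprojL G F adj₁ adj₂ Y A) ≫ (α_ (F.obj X) (F.obj Y) A).inv ≫
        (auxM G F adj₂ X Y ▷ A)) ≫ rprojR G F adj₁ adj₂ (X ⊗ Y) A =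
          auxM G F adj₂ X (Y ⊗ G.obj A) ≫ F.map (α_ X Y (G.obj A)).inv := by
      simp only [Category.assoc]
      rw [claim1 X Y A, Iso.inv_hom_id_assoc, ← MonoidalCategory.whiskerLeft_comp_assoc,
        h₂ Y A, MonoidalCategory.whiskerLeft_id, Category.id_comp]
    calc (F.obj X ◁ rprojL G F adj₁ adj₂ Y A) ≫ (α_ (F.obj X) (F.obj Y) A).inv ≫
          (auxM G F adj₂ X Y ▷ A)
        = ((F.obj X ◁ rprojL G F adj₁ adj₂ Y A) ≫ (α_ (F.obj X) (F.obj Y) A).inv ≫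
            (auxM G F adj₂ X Y ▷ A)) ≫
              (rprojR G F adj₁ adj₂ (X ⊗ Y) A ≫ rprojL G F adj₁ adj₂ (X ⊗ Y) A) := by
          rw [h₁ (X ⊗ Y) A, Category.comp_id]
      _ = (auxM G F adj₂ X (Y ⊗ G.obj A) ≫ F.map (α_ X Y (G.obj A)).inv) ≫
            rprojL G F adj₁ adj₂ (X ⊗ Y) A := by
          rw [← Category.assoc, key]
      _ = auxM G F adj₂ X (Y ⊗ G.obj A) ≫ F.map (α_ X Y (G.obj A)).inv ≫
            rprojL G F adj₁ adj₂ (X ⊗ Y) A := by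
          rw [Category.assoc]
  refine ⟨⟨?_, ?_, ?_, ?_⟩, ⟨?_, ?_, ?_, ?_⟩, ?_, ?_⟩
  · intro X Y X' Y' f g
    rw [hl2, hl2]
    exact m_nat f g
  · intro X Y Z
    rw [hl2, hl2, hl2, hl2]
    dsimp only [inducedFrobData]
    exact m_assoc X Y Z
  · intro X
    rw [hl2, hl₀2]
    dsimp only [inducedFrobData]
    exact m_lu X
  · intro X
    rw [hl2, hl₀2]
    dsimp only [inducedFrobData]
    exact m_ru X
  · intro X Y X' Y' f g
    rw [hp2, hp2]
    exact p_nat f g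
  · intro X Y Z
    rw [hp2, hp2, hp2, hp2]
    dsimp only [inducedFrobData]
    exact p_coassoc X Y Z
  · intro X
    rw [hp2, hp₀2]
    dsimp only [inducedFrobData]
    exact p_lu X
  · intro X
    rw [hp2, hp₀2]
    dsimp only [inducedFrobData]
    exact p_ru X
  · -- first Frobenius condition
    intro X Y Z
    rw [hp2 Y Z, hp2 (X ⊗ Y) Z, hl2 X Y, hl2 X (Y ⊗ Z)]
    dsimp only [inducedFrobData]
    rw [lemB Y Z, lemB (X ⊗ Y) Z]
    simp only [MonoidalCategory.whiskerLeft_comp, Category.assoc]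
    rw [← F.map_comp_assoc, ← associator_inv_naturality_right, F.map_comp, Category.assoc,
      ← reassoc_of% (m_nat_right X
        (show Y ⊗ Z ⟶ Y ⊗ G.obj (F.obj Z) from
          Y ◁ (show Z ⟶ G.obj (F.obj Z) from adj₁.unit.app Z))),
      ← claim4 X Y (F.obj Z)]
  · -- second Frobenius condition
    intro X Y Z
    rw [hp2 X Y, hp2 X (Y ⊗ Z), hl2 Y Z, hl2 (X ⊗ Y) Z]
    dsimp only [inducedFrobData]
    rw [lemA Y Z, lemA (X ⊗ Y) Z]
    simp only [MonoidalCategory.whiskerLeft_comp, Category.assoc]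
    rw [← F.map_comp_assoc, associator_naturality_right, F.map_comp, Category.assoc,
      p_nat_right X
        (show Y ⊗ G.obj (F.obj Z) ⟶ Y ⊗ Z from
          Y ◁ (show G.obj (F.obj Z) ⟶ Z from adj₂.counit.app Z)),
      ← reassoc_of% (claim3 X Y (F.obj Z))]
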